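/- arXiv:cs/0509080 — 2 statements merged into one kernel-verified Lean document; each statement's English description precedes it below -/
import Mathlib

section
/- (Lemma 3: Cauchy–Binet formula for power series.) Let m ≥ 1, let w : ℕ → ℂ, and let a_1,…,a_m, b_1,…,b_m ∈ ℂ. Suppose there is r ≥ max_{i,j} |a_i b_j| such that Σ_{n≥0} |w(n)| r^n < ∞. Then Σ_{k_1 > k_2 > ⋯ > k_m ≥ 0} det[a_i^{k_j}] · det[b_i^{k_j}] · ∏_{i=1}^m w(k_i) = det[ W(a_i b_j) ]_{i,j=1}^m, where W(z) = Σ_{n≥0} w(n) z^n, the outer sum runs over all strictly decreasing m-tuples of nonnegative integers, and all series converge absolutely. -/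
set_option maxHeartbeats 1000000


open Matrix

lemma pi_tsum_aux : ∀ (m : ℕ) (f : Fin m → ℕ → ℂ), (∀ j, Summable fun n => ‖f j n‖) →
    (Summable fun k : Fin m → ℕ => ‖∏ j, f j (k j)‖) ∧
    (Summable fun k : Fin m → ℕ => ∏ j, f j (k j)) ∧
    ∑' k : Fin m → ℕ, ∏ j, f j (k j) = ∏ j, ∑' n, f j n := by
  intro m
  induction m with
  | zero =>
    intro f hf
    have hu : ∀ k : Fin 0 → ℕ, (∏ j, f j (k j)) = 1 := fun k => by simp
    refine ⟨?_, ?_, ?_⟩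
    · exact .of_finite
    · exact .of_finite
    · rw [tsum_eq_single (fun _ => 0)
        (fun b hb => absurd (Subsingleton.elim b _) hb)]
      simp
  | succ m ih =>
    intro f hf
    set e : (ℕ × (Fin m → ℕ)) ≃ (Fin (m + 1) → ℕ) := Fin.consEquiv (fun _ => ℕ) with he
    obtain ⟨ihn, ihs, iht⟩ := ih (fun j => f j.succ) (fun j => hf j.succ)
    have key : ∀ p : ℕ × (Fin m → ℕ),
        (∏ j, f j (e p j)) = f 0 p.1 * ∏ j, f j.succ (p.2 j) := by
      intro p
      rw [Fin.prod_univ_succ]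
      simp [he, Fin.consEquiv]
    have hn2 := (hf 0).mul_norm ihn
    have hs2 := summable_mul_of_summable_norm (hf 0) ihn
    refine ⟨?_, ?_, ?_⟩
    · rw [← e.summable_iff]
      simpa only [Function.comp_def, key] using hn2
    · rw [← e.summable_iff]
      simpa only [Function.comp_def, key] using hs2
    · rw [← e.tsum_eq]
      calc (∑' p : ℕ × (Fin m → ℕ), ∏ j, f j (e p j))
          = ∑' p : ℕ × (Fin m → ℕ), f 0 p.1 * ∏ j, f j.succ (p.2 j) := tsum_congr key
        _ = (∑' n, f 0 n) * (∑' k : Fin m → ℕ, ∏ j, f j.succ (k j)) :=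
            (tsum_mul_tsum_of_summable_norm (hf 0) ihn).symm
        _ = ∏ j, ∑' n, f j n := by rw [iht, Fin.prod_univ_succ]

lemma exists_strictAnti_factor {m : ℕ} (k : Fin m → ℕ) (hk : Function.Injective k) :
    ∃ p : {k : Fin m → ℕ // StrictAnti k} × Equiv.Perm (Fin m), p.1.1 ∘ ⇑p.2 = k := by
  have hsm : StrictMono (k ∘ ⇑(Tuple.sort k)) :=
    (Tuple.monotone_sort k).strictMono_of_injective (hk.comp (Tuple.sort k).injective)
  set τ : Equiv.Perm (Fin m) := Fin.revPerm.trans (Tuple.sort k) with hτ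
  have hanti : StrictAnti (k ∘ ⇑τ) := by
    intro i j hij
    have : Fin.rev j < Fin.rev i := Fin.rev_lt_rev.mpr hij
    exact hsm this
  refine ⟨⟨⟨k ∘ ⇑τ, hanti⟩, τ⁻¹⟩, ?_⟩
  funext j
  simp [Function.comp]

lemma phi_injective {m : ℕ} : Function.Injective
    (fun p : {k : Fin m → ℕ // StrictAnti k} × Equiv.Perm (Fin m) => p.1.1 ∘ ⇑p.2) := by
  rintro ⟨⟨k₀, h₀⟩, σ⟩ ⟨⟨k₁, h₁⟩, τ⟩ h
  simp only at h
  have hrange : Set.range k₀ = Set.range k₁ := by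
    have h2 : Set.range (k₀ ∘ ⇑σ) = Set.range (k₁ ∘ ⇑τ) := by rw [h]
    rwa [Set.range_comp, Set.range_comp, Equiv.range_eq_univ, Equiv.range_eq_univ,
      Set.image_univ, Set.image_univ] at h2
  have hk : k₀ = k₁ := (StrictAnti.range_inj h₀ h₁).mp hrange
  subst hk
  have hστ : σ = τ := by
    ext x
    exact congrArg Fin.val (h₀.injective (congrFun h x))
  simp [hστ]

/-- Lemma 3: Cauchy–Binet formula for power series. -/
theorem cauchy_binet_power_series (m : ℕ) (hm : 1 ≤ m) (w : ℕ → ℂ)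
    (a b : Fin m → ℂ) (r : ℝ)
    (hr : ∀ i j, ‖a i * b j‖ ≤ r)
    (hw : Summable fun n : ℕ => ‖w n‖ * r ^ n) :
    (∀ i j, Summable fun n : ℕ => w n * (a i * b j) ^ n) ∧
    Summable (fun k : {k : Fin m → ℕ // StrictAnti k} =>
      Matrix.det (Matrix.of fun i j : Fin m => a i ^ k.1 j) *
        Matrix.det (Matrix.of fun i j : Fin m => b i ^ k.1 j) *
        ∏ i, w (k.1 i)) ∧
    (∑' k : {k : Fin m → ℕ // StrictAnti k},
        Matrix.det (Matrix.of fun i j : Fin m => a i ^ k.1 j) *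
          Matrix.det (Matrix.of fun i j : Fin m => b i ^ k.1 j) *
          ∏ i, w (k.1 i))
      = Matrix.det (Matrix.of fun i j : Fin m => ∑' n : ℕ, w n * (a i * b j) ^ n) := by
  classical
  have hbound : ∀ (i j : Fin m) (n : ℕ),
      ‖w n * (a i * b j) ^ n‖ ≤ ‖w n‖ * r ^ n := by
    intro i j n
    rw [norm_mul, norm_pow]
    exact mul_le_mul_of_nonneg_left
      (pow_le_pow_left₀ (norm_nonneg _) (hr i j) n) (norm_nonneg _)
  have part1 : ∀ i j, Summable fun n : ℕ => w n * (a i * b j) ^ n := fun i j =>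
    Summable.of_norm_bounded hw (hbound i j)
  -- the expanded products
  set P : Equiv.Perm (Fin m) → (Fin m → ℕ) → ℂ :=
    fun σ k => ∏ j, (w (k j) * (a (σ j) * b j) ^ (k j)) with hP
  have hPs : ∀ σ : Equiv.Perm (Fin m),
      (Summable fun k : Fin m → ℕ => P σ k) ∧
      ∑' k : Fin m → ℕ, P σ k = ∏ j, ∑' n : ℕ, w n * (a (σ j) * b j) ^ n := by
    intro σ
    obtain ⟨h1, h2, h3⟩ := pi_tsum_aux m (fun j n => w n * (a (σ j) * b j) ^ n)
      (fun j => Summable.of_nonneg_of_le (fun n => norm_nonneg _) (hbound _ _) hw)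
    exact ⟨h2, h3⟩
  set D : (Fin m → ℕ) → ℂ :=
    fun k => ∑ σ : Equiv.Perm (Fin m), ((Equiv.Perm.sign σ : ℤ) : ℂ) * P σ k with hDdef
  have hD : ∀ k, D k = (∏ j, w (k j) * b j ^ (k j)) *
      Matrix.det (Matrix.of fun i j : Fin m => a i ^ k j) := by
    intro k
    rw [Matrix.det_apply', Finset.mul_sum, hDdef]
    refine Finset.sum_congr rfl fun σ _ => ?_
    simp only [hP, Matrix.of_apply, mul_pow, Finset.prod_mul_distrib]
    ring
  have hDsum : Summable D :=
    summable_sum fun σ _ => ((hPs σ).1.mul_left _)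
  -- determinant of the matrix of power series
  have hdetM : Matrix.det (Matrix.of fun i j : Fin m => ∑' n : ℕ, w n * (a i * b j) ^ n)
      = ∑' k : Fin m → ℕ, D k := by
    rw [Matrix.det_apply']
    have step : ∀ σ : Equiv.Perm (Fin m),
        ((Equiv.Perm.sign σ : ℤ) : ℂ) *
          (∏ j, (Matrix.of fun i j : Fin m => ∑' n : ℕ, w n * (a i * b j) ^ n) (σ j) j)
          = ∑' k : Fin m → ℕ, ((Equiv.Perm.sign σ : ℤ) : ℂ) * P σ k := by
      intro σ
      rw [tsum_mul_left, (hPs σ).2]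
      simp only [Matrix.of_apply]
    rw [Finset.sum_congr rfl fun σ _ => step σ]
    exact (Summable.tsum_finsetSum fun σ _ => ((hPs σ).1.mul_left _)).symm
  -- restrict to strictly decreasing tuples times permutations
  set Φ : {k : Fin m → ℕ // StrictAnti k} × Equiv.Perm (Fin m) → (Fin m → ℕ) :=
    fun p => p.1.1 ∘ ⇑p.2 with hΦ
  have hΦinj : Function.Injective Φ := phi_injective
  have hsupp : Function.support D ⊆ Set.range Φ := by
    intro k hk
    have hinj : Function.Injective k := by
      by_contra hni
      obtain ⟨j₁, j₂, hj, hne⟩ := Function.not_injective_iff.mp hni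
      apply hk
      rw [hD k, Matrix.det_zero_of_column_eq hne (fun i => by simp [hj]), mul_zero]
    exact exists_strictAnti_factor k hinj
  have hΦsum : Summable (fun p => D (Φ p)) := hDsum.comp_injective hΦinj
  have htsumΦ : ∑' p, D (Φ p) = ∑' k : Fin m → ℕ, D k := hΦinj.tsum_eq hsupp
  -- evaluate the fiber sums
  have hfiber : ∀ k₀ : {k : Fin m → ℕ // StrictAnti k},
      (∑ σ : Equiv.Perm (Fin m), D (Φ (k₀, σ)))
        = Matrix.det (Matrix.of fun i j : Fin m => a i ^ k₀.1 j) *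
            Matrix.det (Matrix.of fun i j : Fin m => b i ^ k₀.1 j) *
            ∏ i, w (k₀.1 i) := by
    intro k₀
    have hdetA : ∀ σ : Equiv.Perm (Fin m),
        Matrix.det (Matrix.of fun i j : Fin m => a i ^ k₀.1 (σ j))
          = ((Equiv.Perm.sign σ : ℤ) : ℂ) *
            Matrix.det (Matrix.of fun i j : Fin m => a i ^ k₀.1 j) := by
      intro σ
      have : (Matrix.of fun i j : Fin m => a i ^ k₀.1 (σ j))
          = (Matrix.of fun i j : Fin m => a i ^ k₀.1 j).submatrix id ⇑σ := rfl
      rw [this, Matrix.det_permute']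
    have hdetB : Matrix.det (Matrix.of fun i j : Fin m => b i ^ k₀.1 j)
        = ∑ σ : Equiv.Perm (Fin m), ((Equiv.Perm.sign σ : ℤ) : ℂ) *
            ∏ j, b j ^ k₀.1 (σ j) := by
      rw [Matrix.det_apply']
      refine Fintype.sum_equiv (Equiv.inv (Equiv.Perm (Fin m))) _ _ fun σ => ?_
      simp only [Matrix.of_apply, Equiv.inv_apply, Equiv.Perm.sign_inv]
      congr 1
      rw [← Equiv.prod_comp σ (fun j => b j ^ k₀.1 (σ⁻¹ j))]
      refine Finset.prod_congr rfl fun j _ => ?_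
      rw [← Equiv.Perm.mul_apply, inv_mul_cancel, Equiv.Perm.one_apply]
    calc (∑ σ : Equiv.Perm (Fin m), D (Φ (k₀, σ)))
        = ∑ σ : Equiv.Perm (Fin m),
            ((∏ j, w (k₀.1 j)) * ∏ j, b j ^ k₀.1 (σ j)) *
              (((Equiv.Perm.sign σ : ℤ) : ℂ) *
                Matrix.det (Matrix.of fun i j : Fin m => a i ^ k₀.1 j)) := by
          refine Finset.sum_congr rfl fun σ _ => ?_
          have h1 : D (Φ (k₀, σ)) = (∏ j, w (k₀.1 (σ j)) * b j ^ k₀.1 (σ j)) *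
              Matrix.det (Matrix.of fun i j : Fin m => a i ^ k₀.1 (σ j)) := hD _
          rw [h1, hdetA σ, Finset.prod_mul_distrib]
          congr 2
          exact Equiv.prod_comp σ (fun j => w (k₀.1 j))
      _ = Matrix.det (Matrix.of fun i j : Fin m => a i ^ k₀.1 j) *
            (∑ σ : Equiv.Perm (Fin m), ((Equiv.Perm.sign σ : ℤ) : ℂ) *
              ∏ j, b j ^ k₀.1 (σ j)) * ∏ i, w (k₀.1 i) := by
          rw [Finset.mul_sum, Finset.sum_mul]
          refine Finset.sum_congr rfl fun σ _ => ?_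
          ring
      _ = _ := by rw [← hdetB]
  -- summability over pairs and factoring
  have hfsum : ∀ k₀ : {k : Fin m → ℕ // StrictAnti k},
      (∑' σ : Equiv.Perm (Fin m), D (Φ (k₀, σ))) = ∑ σ : Equiv.Perm (Fin m), D (Φ (k₀, σ)) :=
    fun k₀ => tsum_fintype _
  have part2 : Summable (fun k : {k : Fin m → ℕ // StrictAnti k} =>
      Matrix.det (Matrix.of fun i j : Fin m => a i ^ k.1 j) *
        Matrix.det (Matrix.of fun i j : Fin m => b i ^ k.1 j) *
        ∏ i, w (k.1 i)) := by
    have := hΦsum.prod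
    refine this.congr fun k₀ => ?_
    rw [hfsum k₀, hfiber k₀]
  refine ⟨part1, part2, ?_⟩
  calc (∑' k : {k : Fin m → ℕ // StrictAnti k},
        Matrix.det (Matrix.of fun i j : Fin m => a i ^ k.1 j) *
          Matrix.det (Matrix.of fun i j : Fin m => b i ^ k.1 j) *
          ∏ i, w (k.1 i))
      = ∑' k₀ : {k : Fin m → ℕ // StrictAnti k}, ∑' σ : Equiv.Perm (Fin m), D (Φ (k₀, σ)) := by
        refine tsum_congr fun k₀ => ?_
        rw [hfsum k₀, hfiber k₀]
    _ = ∑' p, D (Φ p) :=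
        (Summable.tsum_prod' hΦsum fun k₀ => hΦsum.prod_factor k₀).symm
    _ = ∑' k : Fin m → ℕ, D k := htsumΦ
    _ = Matrix.det (Matrix.of fun i j : Fin m => ∑' n : ℕ, w n * (a i * b j) ^ n) := hdetM.symm
end

section
/- (Lemma 6: exponential bound on the double unitary integral.) Let M ≥ 1, let T and R be M×M Hermitian positive definite complex matrices with smallest eigenvalues of T^{-1} and R^{-1} equal to t_min and r_min respectively, and let D = diag(μ) with μ_i = √λ_i for λ_1,…,λ_M ≥ 0. Then 0 < ∫_{U(M)} ∫_{U(M)} exp( −Tr( T^{-1} U D V† R^{-1} V D† U† ) ) dU dV ≤ exp( −t_min · r_min · Σ_{i=1}^M λ_i ). In particular this double integral is bounded by a decaying exponential in each λ_i as λ_i → ∞. -/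
open MeasureTheory Matrix
open scoped ComplexOrder

noncomputable instance (n : ℕ) : MeasurableSpace (Matrix (Fin n) (Fin n) ℂ) :=
  inferInstanceAs (MeasurableSpace (Fin n → Fin n → ℂ))

noncomputable instance (n : ℕ) : BorelSpace (Matrix (Fin n) (Fin n) ℂ) :=
  inferInstanceAs (BorelSpace (Fin n → Fin n → ℂ))

instance (n : ℕ) : BorelSpace (Matrix.unitaryGroup (Fin n) ℂ) :=
  Subtype.borelSpace _

instance (n : ℕ) : SecondCountableTopology (Matrix (Fin n) (Fin n) ℂ) :=
  inferInstanceAs (SecondCountableTopology (Fin n → Fin n → ℂ))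

instance (n : ℕ) : SecondCountableTopology (Matrix.unitaryGroup (Fin n) ℂ) :=
  TopologicalSpace.secondCountableTopology_induced _ _ Subtype.val

lemma aux_re_trace_nonneg {n : ℕ} {A : Matrix (Fin n) (Fin n) ℂ} (hA : A.PosSemidef) :
    0 ≤ A.trace.re := by
  rw [Matrix.trace, Complex.re_sum]
  refine Finset.sum_nonneg fun i _ => ?_
  have h := hA.re_dotProduct_nonneg (Pi.single i 1)
  simpa [dotProduct, Matrix.mulVec, Pi.single_apply, Matrix.diag] using h

open scoped MatrixOrder in
lemma aux_re_trace_mul_nonneg {n : ℕ} {B C : Matrix (Fin n) (Fin n) ℂ}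
    (hB : B.PosSemidef) (hC : C.PosSemidef) : 0 ≤ (B * C).trace.re := by
  obtain ⟨b, rfl⟩ := CStarAlgebra.nonneg_iff_eq_star_mul_self.mp hB.nonneg
  obtain ⟨c, rfl⟩ := CStarAlgebra.nonneg_iff_eq_star_mul_self.mp hC.nonneg
  rw [Matrix.star_eq_conjTranspose, Matrix.star_eq_conjTranspose]
  have h2 : ((b * cᴴ)ᴴ * (b * cᴴ)).trace = (bᴴ * b * (cᴴ * c)).trace := by
    rw [conjTranspose_mul, conjTranspose_conjTranspose]
    rw [show c * bᴴ * (b * cᴴ) = c * (bᴴ * b * cᴴ) by simp only [Matrix.mul_assoc],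
      Matrix.trace_mul_comm]
    simp only [Matrix.mul_assoc]
  exact h2 ▸ aux_re_trace_nonneg (posSemidef_conjTranspose_mul_self _)

lemma aux_trace_mul_le {n : ℕ} {B C : Matrix (Fin n) (Fin n) ℂ} {c : ℝ}
    (hB : B.IsHermitian) (hc : ∀ i, c ≤ hB.eigenvalues i) (hC : C.PosSemidef) :
    c * C.trace.re ≤ (B * C).trace.re := by
  have hW : (hB.eigenvectorUnitary : Matrix (Fin n) (Fin n) ℂ) *
      star (hB.eigenvectorUnitary : Matrix (Fin n) (Fin n) ℂ) = 1 :=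
    Matrix.mem_unitaryGroup_iff.mp hB.eigenvectorUnitary.2
  have hPSD : (B - (c : ℂ) • 1).PosSemidef := by
    have hEq : B - (c : ℂ) • 1 =
        (hB.eigenvectorUnitary : Matrix (Fin n) (Fin n) ℂ) *
          Matrix.diagonal (fun i => ((hB.eigenvalues i - c : ℝ) : ℂ)) *
          (hB.eigenvectorUnitary : Matrix (Fin n) (Fin n) ℂ)ᴴ := by
      conv_lhs => rw [hB.spectral_theorem, Unitary.conjStarAlgAut_apply]
      rw [← Matrix.star_eq_conjTranspose]
      have : Matrix.diagonal (fun i => ((hB.eigenvalues i - c : ℝ) : ℂ)) =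
          Matrix.diagonal (RCLike.ofReal ∘ hB.eigenvalues) - (c : ℂ) • 1 := by
        ext i j
        by_cases h : i = j <;>
          simp [h, Matrix.one_apply, Matrix.diagonal_apply, Complex.ofReal_sub]
      rw [this, Matrix.mul_sub, Matrix.sub_mul]
      rw [Matrix.mul_smul, Matrix.mul_one, Matrix.smul_mul, hW]
    rw [hEq, ← Matrix.star_eq_conjTranspose]
    refine (Matrix.posSemidef_diagonal_iff.mpr fun i => ?_).mul_mul_conjTranspose_same _
    exact Complex.zero_le_real.mpr (by linarith [hc i])
  have h0 := aux_re_trace_mul_nonneg hPSD hC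
  have hTr : ((B - (c : ℂ) • 1) * C).trace = (B * C).trace - (c : ℂ) * C.trace := by
    rw [Matrix.sub_mul, Matrix.trace_sub, Matrix.smul_mul, Matrix.one_mul,
      Matrix.trace_smul, smul_eq_mul]
  rw [hTr, Complex.sub_re, Complex.re_ofReal_mul] at h0
  linarith

set_option maxHeartbeats 1000000 in
/-- Lemma 6: exponential bound on the double unitary integral appearing in the
fully correlated channel problem.  The integrals are with respect to the normalized
Haar (probability) measure on `U(M)`. -/
theorem double_unitary_integral_exponential_bound (M : ℕ) (hM : 1 ≤ M)
    (T R : Matrix (Fin M) (Fin M) ℂ) (hT : T.PosDef) (hR : R.PosDef)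
    (lam : Fin M → ℝ) (hlam : ∀ i, 0 ≤ lam i)
    (ν : Measure (Matrix.unitaryGroup (Fin M) ℂ)) [IsProbabilityMeasure ν]
    (hinv : ∀ U : Matrix.unitaryGroup (Fin M) ℂ, ν.map (fun V => U * V) = ν) :
    0 < (∫ U : Matrix.unitaryGroup (Fin M) ℂ, ∫ V : Matrix.unitaryGroup (Fin M) ℂ,
        Real.exp (-(Matrix.trace (T⁻¹ * (U : Matrix (Fin M) (Fin M) ℂ) *
          Matrix.diagonal (fun i => (Real.sqrt (lam i) : ℂ)) *
          (V : Matrix (Fin M) (Fin M) ℂ)ᴴ * R⁻¹ * (V : Matrix (Fin M) (Fin M) ℂ) *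
          (Matrix.diagonal (fun i => (Real.sqrt (lam i) : ℂ)))ᴴ *
          (U : Matrix (Fin M) (Fin M) ℂ)ᴴ)).re) ∂ν ∂ν) ∧
      (∫ U : Matrix.unitaryGroup (Fin M) ℂ, ∫ V : Matrix.unitaryGroup (Fin M) ℂ,
        Real.exp (-(Matrix.trace (T⁻¹ * (U : Matrix (Fin M) (Fin M) ℂ) *
          Matrix.diagonal (fun i => (Real.sqrt (lam i) : ℂ)) *
          (V : Matrix (Fin M) (Fin M) ℂ)ᴴ * R⁻¹ * (V : Matrix (Fin M) (Fin M) ℂ) *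
          (Matrix.diagonal (fun i => (Real.sqrt (lam i) : ℂ)))ᴴ *
          (U : Matrix (Fin M) (Fin M) ℂ)ᴴ)).re) ∂ν ∂ν) ≤
        Real.exp (-(Finset.univ.inf' ⟨⟨0, hM⟩, Finset.mem_univ _⟩ hT.inv.1.eigenvalues) *
          (Finset.univ.inf' ⟨⟨0, hM⟩, Finset.mem_univ _⟩ hR.inv.1.eigenvalues) *
          ∑ i : Fin M, lam i) := by
  classical
  set D : Matrix (Fin M) (Fin M) ℂ := Matrix.diagonal (fun i => (Real.sqrt (lam i) : ℂ)) with hD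
  set tmin : ℝ := Finset.univ.inf' ⟨⟨0, hM⟩, Finset.mem_univ _⟩ hT.inv.1.eigenvalues with htmin
  set rmin : ℝ := Finset.univ.inf' ⟨⟨0, hM⟩, Finset.mem_univ _⟩ hR.inv.1.eigenvalues with hrmin
  set S : ℝ := ∑ i : Fin M, lam i with hS
  set c : ℝ := tmin * rmin * S with hc
  have htminpos : 0 < tmin := by
    rw [htmin]; refine (Finset.lt_inf'_iff _).mpr ?_
    exact fun i _ => hT.inv.eigenvalues_pos i
  have hrminpos : 0 < rmin := by
    rw [hrmin]; refine (Finset.lt_inf'_iff _).mpr ?_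
    exact fun i _ => hR.inv.eigenvalues_pos i
  have hSnn : 0 ≤ S := Finset.sum_nonneg fun i _ => hlam i
  have hcnn : 0 ≤ c := by positivity
  -- the integrand as a function on the product
  set F : (Matrix.unitaryGroup (Fin M) ℂ) × (Matrix.unitaryGroup (Fin M) ℂ) → ℝ := fun p =>
    Real.exp (-(Matrix.trace (T⁻¹ * (p.1 : Matrix (Fin M) (Fin M) ℂ) * D *
      (p.2 : Matrix (Fin M) (Fin M) ℂ)ᴴ * R⁻¹ * (p.2 : Matrix (Fin M) (Fin M) ℂ) * Dᴴ *
      (p.1 : Matrix (Fin M) (Fin M) ℂ)ᴴ)).re) with hF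
  -- pointwise bound
  have hXc : ∀ p : (Matrix.unitaryGroup (Fin M) ℂ) × (Matrix.unitaryGroup (Fin M) ℂ), F p ≤ Real.exp (-c) := by
    rintro ⟨U, V⟩
    apply Real.exp_le_exp.mpr
    rw [neg_le_neg_iff]
    set A : Matrix (Fin M) (Fin M) ℂ :=
      (U : Matrix (Fin M) (Fin M) ℂ) * D * (V : Matrix (Fin M) (Fin M) ℂ)ᴴ with hA
    have hUU : (U : Matrix (Fin M) (Fin M) ℂ)ᴴ * (U : Matrix (Fin M) (Fin M) ℂ) = 1 := by
      rw [← Matrix.star_eq_conjTranspose]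
      exact Matrix.mem_unitaryGroup_iff'.mp U.2
    have hVV : (V : Matrix (Fin M) (Fin M) ℂ)ᴴ * (V : Matrix (Fin M) (Fin M) ℂ) = 1 := by
      rw [← Matrix.star_eq_conjTranspose]
      exact Matrix.mem_unitaryGroup_iff'.mp V.2
    have hrw : T⁻¹ * (U : Matrix (Fin M) (Fin M) ℂ) * D * (V : Matrix (Fin M) (Fin M) ℂ)ᴴ *
        R⁻¹ * (V : Matrix (Fin M) (Fin M) ℂ) * Dᴴ * (U : Matrix (Fin M) (Fin M) ℂ)ᴴ =
        T⁻¹ * (A * R⁻¹ * Aᴴ) := by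
      rw [hA]
      simp only [Matrix.conjTranspose_mul, Matrix.conjTranspose_conjTranspose]
      simp only [Matrix.mul_assoc]
    rw [hrw]
    have hPSD1 : (A * R⁻¹ * Aᴴ).PosSemidef :=
      hR.inv.posSemidef.mul_mul_conjTranspose_same A
    have step1 : tmin * (A * R⁻¹ * Aᴴ).trace.re ≤ (T⁻¹ * (A * R⁻¹ * Aᴴ)).trace.re :=
      aux_trace_mul_le hT.inv.1 (fun i => Finset.inf'_le _ (Finset.mem_univ i)) hPSD1
    have hcyc : (A * R⁻¹ * Aᴴ).trace = (R⁻¹ * (Aᴴ * A)).trace := by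
      rw [Matrix.trace_mul_cycle, Matrix.trace_mul_comm, ← Matrix.mul_assoc]
    have step2 : rmin * (Aᴴ * A).trace.re ≤ (R⁻¹ * (Aᴴ * A)).trace.re :=
      aux_trace_mul_le hR.inv.1 (fun i => Finset.inf'_le _ (Finset.mem_univ i))
        (Matrix.posSemidef_conjTranspose_mul_self A)
    have step3 : (Aᴴ * A).trace = (S : ℂ) := by
      have h1 : Aᴴ * A = (V : Matrix (Fin M) (Fin M) ℂ) * (Dᴴ * D) *
          (V : Matrix (Fin M) (Fin M) ℂ)ᴴ := by
        rw [hA]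
        simp only [Matrix.conjTranspose_mul, Matrix.conjTranspose_conjTranspose]
        calc (V:Matrix (Fin M) (Fin M) ℂ) * (Dᴴ * (U:Matrix (Fin M) (Fin M) ℂ)ᴴ) *
              ((U:Matrix (Fin M) (Fin M) ℂ) * D * (V:Matrix (Fin M) (Fin M) ℂ)ᴴ)
            = (V:Matrix (Fin M) (Fin M) ℂ) * Dᴴ *
              ((U:Matrix (Fin M) (Fin M) ℂ)ᴴ * (U:Matrix (Fin M) (Fin M) ℂ)) *
              D * (V:Matrix (Fin M) (Fin M) ℂ)ᴴ := by simp only [Matrix.mul_assoc]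
          _ = _ := by rw [hUU]; simp only [Matrix.mul_assoc, Matrix.one_mul]
      rw [h1, Matrix.trace_mul_cycle, ← Matrix.mul_assoc, hVV, Matrix.one_mul]
      rw [hD, Matrix.diagonal_conjTranspose, Matrix.diagonal_mul_diagonal,
        Matrix.trace_diagonal, hS]
      push_cast
      refine Finset.sum_congr rfl fun i _ => ?_
      simp [← Complex.ofReal_mul, Real.mul_self_sqrt (hlam i)]
    have hSre : (Aᴴ * A).trace.re = S := by rw [step3, Complex.ofReal_re]
    rw [hcyc] at step1
    rw [hSre] at step2
    calc c = tmin * (rmin * S) := by rw [hc]; ring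
      _ ≤ tmin * (R⁻¹ * (Aᴴ * A)).trace.re := by
          exact mul_le_mul_of_nonneg_left step2 htminpos.le
      _ ≤ _ := step1
  have hFpos : ∀ p : (Matrix.unitaryGroup (Fin M) ℂ) × (Matrix.unitaryGroup (Fin M) ℂ), 0 < F p := fun p => Real.exp_pos _
  -- continuity
  have hcU : Continuous fun p : (Matrix.unitaryGroup (Fin M) ℂ) × (Matrix.unitaryGroup (Fin M) ℂ) => (p.1 : Matrix (Fin M) (Fin M) ℂ) :=
    continuous_subtype_val.comp continuous_fst
  have hcV : Continuous fun p : (Matrix.unitaryGroup (Fin M) ℂ) × (Matrix.unitaryGroup (Fin M) ℂ) => (p.2 : Matrix (Fin M) (Fin M) ℂ) :=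
    continuous_subtype_val.comp continuous_snd
  have hFc : Continuous F := by
    refine Real.continuous_exp.comp (Continuous.neg (Complex.continuous_re.comp ?_))
    exact Continuous.matrix_trace
      (((((((continuous_const.matrix_mul hcU).matrix_mul
        continuous_const).matrix_mul hcV.matrix_conjTranspose).matrix_mul
        continuous_const).matrix_mul hcV).matrix_mul
        continuous_const).matrix_mul hcU.matrix_conjTranspose)
  have hFsm : StronglyMeasurable F := hFc.stronglyMeasurable
  -- inner integrals
  have hintV : ∀ U : Matrix.unitaryGroup (Fin M) ℂ, Integrable (fun V : Matrix.unitaryGroup (Fin M) ℂ => F (U, V)) ν := fun U =>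
    (integrable_const (Real.exp (-c))).mono'
      (hFc.comp (Continuous.prodMk_right U)).aestronglyMeasurable
      (Filter.Eventually.of_forall fun V => by
        rw [Real.norm_eq_abs, abs_of_pos (hFpos _)]; exact hXc _)
  have hgle : ∀ U : Matrix.unitaryGroup (Fin M) ℂ, (∫ V : Matrix.unitaryGroup (Fin M) ℂ, F (U, V) ∂ν) ≤ Real.exp (-c) := fun U => by
    calc (∫ V : Matrix.unitaryGroup (Fin M) ℂ, F (U, V) ∂ν) ≤ ∫ _ : Matrix.unitaryGroup (Fin M) ℂ, Real.exp (-c) ∂ν :=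
          integral_mono (hintV U) (integrable_const _) fun V => hXc _
      _ = Real.exp (-c) := by simp
  have hgpos : ∀ U : Matrix.unitaryGroup (Fin M) ℂ, 0 < ∫ V : Matrix.unitaryGroup (Fin M) ℂ, F (U, V) ∂ν := fun U => by
    rw [integral_pos_iff_support_of_nonneg (fun V => (hFpos _).le) (hintV U)]
    have : Function.support (fun V : Matrix.unitaryGroup (Fin M) ℂ => F (U, V)) = Set.univ :=
      Set.eq_univ_iff_forall.mpr fun V => (hFpos _).ne'
    rw [this]
    simp
  have hgsm : StronglyMeasurable fun U : Matrix.unitaryGroup (Fin M) ℂ => ∫ V : Matrix.unitaryGroup (Fin M) ℂ, F (U, V) ∂ν :=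
    hFsm.integral_prod_right'
  have hgint : Integrable (fun U : Matrix.unitaryGroup (Fin M) ℂ => ∫ V : Matrix.unitaryGroup (Fin M) ℂ, F (U, V) ∂ν) ν :=
    (integrable_const (Real.exp (-c))).mono' hgsm.aestronglyMeasurable
      (Filter.Eventually.of_forall fun U => by
        rw [Real.norm_eq_abs, abs_of_pos (hgpos U)]; exact hgle U)
  have hpos : 0 < ∫ U : Matrix.unitaryGroup (Fin M) ℂ, ∫ V : Matrix.unitaryGroup (Fin M) ℂ, F (U, V) ∂ν ∂ν := by
    rw [integral_pos_iff_support_of_nonneg (fun U => (hgpos U).le) hgint]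
    have : Function.support (fun U : Matrix.unitaryGroup (Fin M) ℂ => ∫ V : Matrix.unitaryGroup (Fin M) ℂ, F (U, V) ∂ν) = Set.univ :=
      Set.eq_univ_iff_forall.mpr fun U => (hgpos U).ne'
    rw [this]
    simp
  have hle : (∫ U : Matrix.unitaryGroup (Fin M) ℂ, ∫ V : Matrix.unitaryGroup (Fin M) ℂ, F (U, V) ∂ν ∂ν) ≤ Real.exp (-c) := by
    calc (∫ U : Matrix.unitaryGroup (Fin M) ℂ, ∫ V : Matrix.unitaryGroup (Fin M) ℂ, F (U, V) ∂ν ∂ν) ≤ ∫ _ : Matrix.unitaryGroup (Fin M) ℂ, Real.exp (-c) ∂ν :=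
          integral_mono hgint (integrable_const _) fun U => hgle U
      _ = Real.exp (-c) := by simp
  have hrhs : Real.exp (-c) = Real.exp (-tmin * rmin * S) := by rw [hc]; ring_nf
  exact ⟨hpos, hrhs ▸ hle⟩
end
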